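/- Vandermonde–Wronskian relation: let K be a division ring, S an endomorphism, D an S-derivation, a ∈ K, and u₁,…,uₙ nonzero elements of K. Then V(a^{u₁},…,a^{uₙ}) · diag(u₁,…,uₙ) = W(u₁,…,uₙ), where V is the generalized Vandermonde matrix with (i,j)-entry N_{i-1}(a^{u_j}) and W is the generalized Wronskian matrix with (i,j)-entry Tₐ^{i-1}(u_j). -/

import Mathlib

/-- The `(S,D)`-conjugate `a^c := S(c)·a·c⁻¹ + D(c)·c⁻¹`. -/
def sdConj {K : Type*} [DivisionRing K] (S : K →+* K) (D : K →+ K) (a c : K) : K :=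
  S c * a * c⁻¹ + D c * c⁻¹

/-- The pseudo-linear map `Tₐ(x) = S(x)a + D(x)`. -/
def sdT {K : Type*} [DivisionRing K] (S : K →+* K) (D : K →+ K) (a x : K) : K :=
  S x * a + D x

/-- `Nᵢ(x)`: `N₀(x) = 1`, `N_{i+1}(x) = S(Nᵢ(x))x + D(Nᵢ(x))`. -/
def sdN {K : Type*} [DivisionRing K] (S : K →+* K) (D : K →+ K) (x : K) : ℕ → K
  | 0 => 1
  | i + 1 => S (sdN S D x i) * x + D (sdN S D x i)

lemma sdN_conj_mul {K : Type*} [DivisionRing K] (S : K →+* K) (D : K →+ K)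
    (hD : ∀ a b : K, D (a * b) = S a * D b + D a * b)
    (a u : K) (hu : u ≠ 0) : ∀ i : ℕ,
    sdN S D (sdConj S D a u) i * u = (sdT S D a)^[i] u := by
  intro i
  induction i with
  | zero => simp [sdN]
  | succ i ih =>
    rw [Function.iterate_succ_apply', ← ih]
    simp only [sdN, sdT, sdConj, hD, map_mul]
    simp only [add_mul, mul_add, mul_assoc, inv_mul_cancel₀ hu, mul_one]
    abel

/-- Vandermonde–Wronskian relation:
`V(a^{u₁},…,a^{uₙ}) · diag(u₁,…,uₙ) = W(u₁,…,uₙ)`. -/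
theorem vandermonde_mul_diag_eq_wronskian {K : Type*} [DivisionRing K]
    (S : K →+* K) (D : K →+ K)
    (hD : ∀ a b : K, D (a * b) = S a * D b + D a * b)
    (n : ℕ) (a : K) (u : Fin n → K) (hu : ∀ j, u j ≠ 0) :
    (Matrix.of fun i j : Fin n => sdN S D (sdConj S D a (u j)) (i : ℕ)) *
        Matrix.diagonal u =
      Matrix.of fun i j : Fin n => (sdT S D a)^[(i : ℕ)] (u j) := by
  ext i j
  rw [Matrix.mul_diagonal]
  exact sdN_conj_mul S D hD a (u j) (hu j) i
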